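/- Let 0 < q < 1, 1/2 < q_s ≤ 1, c < v, and 0 < s < (v-c)(1-q)(2qq_s - q) with 2qq_s - q > 0. Define G(p) = (v-c)(1-q)q_s · ((1-(1-p)q - pqq_s)/(pq(1-q_s)² + q_s(1-q))) · (1 - (qq_s(1-pq_s)+(1-q)(1-q_s))/(1-pqq_s)). Then G is strictly increasing and continuous on [0,1], G(0) = (v-c)(1-q)(q_s + q - 2qq_s) < (v-c)(1-q)q_s - s, and G(1) = (v-c)(1-q)q_s > (v-c)(1-q)q_s - s; hence there exists a unique p ∈ (0,1) with G(p) = (v-c)(1-q)q_s - s, and this p is strictly decreasing in s. -/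

import Mathlib

open Set

theorem stmt_6 (q qs c v s : ℝ) (hq0 : 0 < q) (hq1 : q < 1) (hqs : 1 / 2 < qs)
    (hqs1 : qs ≤ 1) (hcv : c < v) (hthr : 0 < 2 * q * qs - q)
    (hs0 : 0 < s) (hs : s < (v - c) * (1 - q) * (2 * q * qs - q)) :
    let G : ℝ → ℝ := fun p =>
      (v - c) * (1 - q) * qs *
        ((1 - (1 - p) * q - p * q * qs) / (p * q * (1 - qs) ^ 2 + qs * (1 - q))) *
        (1 - (q * qs * (1 - p * qs) + (1 - q) * (1 - qs)) / (1 - p * q * qs))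
    StrictMonoOn G (Set.Icc 0 1) ∧ ContinuousOn G (Set.Icc 0 1) ∧
    G 0 = (v - c) * (1 - q) * (qs + q - 2 * q * qs) ∧
    G 0 < (v - c) * (1 - q) * qs - s ∧
    G 1 = (v - c) * (1 - q) * qs ∧
    G 1 > (v - c) * (1 - q) * qs - s ∧
    (∃! p, p ∈ Set.Ioo (0 : ℝ) 1 ∧ G p = (v - c) * (1 - q) * qs - s) ∧
    (∀ s₁ s₂ p₁ p₂, 0 < s₁ → s₁ < s₂ → s₂ < (v - c) * (1 - q) * (2 * q * qs - q) →
      p₁ ∈ Set.Ioo (0 : ℝ) 1 → p₂ ∈ Set.Ioo (0 : ℝ) 1 →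
      G p₁ = (v - c) * (1 - q) * qs - s₁ → G p₂ = (v - c) * (1 - q) * qs - s₂ →
      p₂ < p₁) := by
  intro G
  have hq' : (0:ℝ) < 1 - q := by linarith
  have hqs0 : (0:ℝ) < qs := by linarith
  have hb : (0:ℝ) ≤ 1 - qs := by linarith
  have hvc : (0:ℝ) < v - c := by linarith
  have hA : (0:ℝ) < (v - c) * (1 - q) * qs := by positivity
  -- denominators positive
  have hD1 : ∀ p ∈ Icc (0:ℝ) 1, 0 < p * q * (1 - qs) ^ 2 + qs * (1 - q) := by
    intro p hp
    have h1 : 0 ≤ p * q * (1 - qs) ^ 2 := by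
      have := hp.1
      positivity
    nlinarith [mul_pos hqs0 hq']
  have hD2 : ∀ p ∈ Icc (0:ℝ) 1, 0 < 1 - p * q * qs := by
    intro p hp
    obtain ⟨h0, h1⟩ := hp
    nlinarith [mul_pos hq0 hqs0, mul_nonneg (mul_nonneg h0 hq0.le) hqs0.le]
  -- the two fraction factors
  set F : ℝ → ℝ := fun p =>
    (1 - (1 - p) * q - p * q * qs) / (p * q * (1 - qs) ^ 2 + qs * (1 - q)) with hF
  set H : ℝ → ℝ := fun p =>
    1 - (q * qs * (1 - p * qs) + (1 - q) * (1 - qs)) / (1 - p * q * qs) with hHdef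
  have hG : ∀ p, G p = (v - c) * (1 - q) * qs * F p * H p := fun p => rfl
  -- rewrite H as a single fraction
  have hHfrac : ∀ p ∈ Icc (0:ℝ) 1,
      H p = (qs * (1 - q) + q * (1 - qs) - p * q * qs * (1 - qs)) / (1 - p * q * qs) := by
    intro p hp
    have h2 := (hD2 p hp).ne'
    simp only [hHdef]
    rw [one_sub_div h2]
    ring
  -- positivity of F on Icc
  have hFpos : ∀ p ∈ Icc (0:ℝ) 1, 0 < F p := by
    intro p hp
    apply div_pos _ (hD1 p hp)
    nlinarith [mul_nonneg (mul_nonneg hp.1 hq0.le) hb]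
  -- positivity of H on Icc
  have hHpos : ∀ p ∈ Icc (0:ℝ) 1, 0 < H p := by
    intro p hp
    rw [hHfrac p hp]
    apply div_pos _ (hD2 p hp)
    have h1 : 0 ≤ 1 - p * qs := by nlinarith [hp.1, hp.2]
    nlinarith [mul_pos hqs0 hq', mul_nonneg (mul_nonneg hq0.le hb) h1]
  -- F monotone (non-strict)
  have hFmono : ∀ p₁ ∈ Icc (0:ℝ) 1, ∀ p₂ ∈ Icc (0:ℝ) 1, p₁ < p₂ → F p₁ ≤ F p₂ := by
    intro p₁ hp₁ p₂ hp₂ h12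
    rw [hF]
    rw [div_le_div_iff₀ (hD1 p₁ hp₁) (hD1 p₂ hp₂)]
    have key : 0 ≤ (p₂ - p₁) * ((1 - q) * (q * (1 - qs)) * (2 * qs - 1)) := by
      have : (0:ℝ) ≤ 2 * qs - 1 := by linarith
      have h' : (0:ℝ) ≤ p₂ - p₁ := by linarith
      positivity
    nlinarith [key]
  -- H strictly monotone
  have hHmono : ∀ p₁ ∈ Icc (0:ℝ) 1, ∀ p₂ ∈ Icc (0:ℝ) 1, p₁ < p₂ → H p₁ < H p₂ := by
    intro p₁ hp₁ p₂ hp₂ h12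
    rw [hHfrac p₁ hp₁, hHfrac p₂ hp₂]
    rw [div_lt_div_iff₀ (hD2 p₁ hp₁) (hD2 p₂ hp₂)]
    have key : 0 < (p₂ - p₁) * ((q * qs) * ((1 - q) * (2 * qs - 1))) := by
      have h1 : (0:ℝ) < 2 * qs - 1 := by linarith
      have h' : (0:ℝ) < p₂ - p₁ := by linarith
      positivity
    nlinarith [key]
  -- strict monotonicity of G
  have hGmono : StrictMonoOn G (Icc 0 1) := by
    intro p₁ hp₁ p₂ hp₂ h12
    rw [hG p₁, hG p₂]
    have hF1 := hFpos p₁ hp₁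
    have hF2 := hFpos p₂ hp₂
    have hH1 := hHpos p₁ hp₁
    have hH2 := hHpos p₂ hp₂
    have h1 : F p₁ * H p₁ < F p₂ * H p₂ := by
      calc F p₁ * H p₁ ≤ F p₂ * H p₁ :=
            mul_le_mul_of_nonneg_right (hFmono p₁ hp₁ p₂ hp₂ h12) hH1.le
        _ < F p₂ * H p₂ := by
            exact mul_lt_mul_of_pos_left (hHmono p₁ hp₁ p₂ hp₂ h12) hF2
    calc (v - c) * (1 - q) * qs * F p₁ * H p₁
        = (v - c) * (1 - q) * qs * (F p₁ * H p₁) := by ring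
      _ < (v - c) * (1 - q) * qs * (F p₂ * H p₂) := by
          exact mul_lt_mul_of_pos_left h1 hA
      _ = (v - c) * (1 - q) * qs * F p₂ * H p₂ := by ring
  -- continuity
  have hGcont : ContinuousOn G (Icc 0 1) := by
    apply ContinuousOn.mul
    · apply ContinuousOn.mul continuousOn_const
      exact ContinuousOn.div (by fun_prop) (by fun_prop)
        (fun p hp => (hD1 p hp).ne')
    · apply ContinuousOn.sub continuousOn_const
      exact ContinuousOn.div (by fun_prop) (by fun_prop)
        (fun p hp => (hD2 p hp).ne')
  -- endpoint values
  have hd1 : (0:ℝ) * q * (1 - qs) ^ 2 + qs * (1 - q) ≠ 0 := by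
    have := hD1 0 (by constructor <;> norm_num)
    exact this.ne'
  have hd2 : (1:ℝ) - 0 * q * qs ≠ 0 := by norm_num
  have hG0 : G 0 = (v - c) * (1 - q) * (qs + q - 2 * q * qs) := by
    show (v - c) * (1 - q) * qs *
        ((1 - (1 - 0) * q - 0 * q * qs) / (0 * q * (1 - qs) ^ 2 + qs * (1 - q))) *
        (1 - (q * qs * (1 - 0 * qs) + (1 - q) * (1 - qs)) / (1 - 0 * q * qs)) = _
    have h1 : qs * (1 - q) ≠ 0 := by positivity
    field_simp
    ring
  have he1 : (1:ℝ) * q * (1 - qs) ^ 2 + qs * (1 - q) ≠ 0 :=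
    (hD1 1 (by constructor <;> norm_num)).ne'
  have he2 : (1:ℝ) - 1 * q * qs ≠ 0 :=
    (hD2 1 (by constructor <;> norm_num)).ne'
  have he1' : q * (1 - qs) ^ 2 + qs * (1 - q) ≠ 0 := by
    have := hD1 1 (by constructor <;> norm_num)
    intro hc; rw [show (1:ℝ) * q * (1 - qs) ^ 2 + qs * (1 - q)
      = q * (1 - qs) ^ 2 + qs * (1 - q) by ring] at this; linarith
  have he2' : (1:ℝ) - q * qs ≠ 0 := by
    have := hD2 1 (by constructor <;> norm_num)
    intro hc; rw [show (1:ℝ) - 1 * q * qs = 1 - q * qs by ring] at this; linarith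
  have hG1 : G 1 = (v - c) * (1 - q) * qs := by
    show (v - c) * (1 - q) * qs *
        ((1 - (1 - 1) * q - 1 * q * qs) / (1 * q * (1 - qs) ^ 2 + qs * (1 - q))) *
        (1 - (q * qs * (1 - 1 * qs) + (1 - q) * (1 - qs)) / (1 - 1 * q * qs)) = _
    rw [show (1:ℝ) * q * (1 - qs) ^ 2 + qs * (1 - q) = q * (1 - qs) ^ 2 + qs * (1 - q) by ring,
      show (1:ℝ) - 1 * q * qs = 1 - q * qs by ring]
    field_simp
    ring
  have hG0lt : G 0 < (v - c) * (1 - q) * qs - s := by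
    rw [hG0]; nlinarith [hs]
  have hG1gt : G 1 > (v - c) * (1 - q) * qs - s := by
    rw [hG1]; linarith
  -- existence and uniqueness
  have hexu : ∃! p, p ∈ Ioo (0:ℝ) 1 ∧ G p = (v - c) * (1 - q) * qs - s := by
    have hsub := intermediate_value_Ioo (zero_le_one (α := ℝ)) hGcont
    have hmem : (v - c) * (1 - q) * qs - s ∈ Ioo (G 0) (G 1) := ⟨hG0lt, hG1gt⟩
    obtain ⟨p, hpI, hpEq⟩ := hsub hmem
    refine ⟨p, ⟨hpI, hpEq⟩, ?_⟩
    rintro p' ⟨hp'I, hp'Eq⟩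
    have hinj := hGmono.injOn
    exact hinj (Ioo_subset_Icc_self hp'I) (Ioo_subset_Icc_self hpI) (hp'Eq.trans hpEq.symm)
  refine ⟨hGmono, hGcont, hG0, hG0lt, hG1, hG1gt, hexu, ?_⟩
  intro s₁ s₂ p₁ p₂ hs₁0 hs₁₂ hs₂ hp₁ hp₂ hGp₁ hGp₂
  by_contra hcon
  push_neg at hcon
  rcases lt_or_eq_of_le hcon with hlt | heq
  · have := hGmono (Ioo_subset_Icc_self hp₁) (Ioo_subset_Icc_self hp₂) hlt
    rw [hGp₁, hGp₂] at this
    linarith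
  · rw [heq] at hGp₁
    rw [hGp₁] at hGp₂
    linarith
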